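/- Let p be a prime and q a positive integer, and suppose distinct positive integers x₁ and x₂ satisfy q/p = 1/x₁ + 1/x₂. Then the solution is unique up to order: {x₁, x₂} = {(p+1)/q, p·(p+1)/q}. -/

import Mathlib

lemma nosol (m a b : ℕ) (hm : 0 < m) (ha : 0 < a) (hb : 0 < b) (hab : a ≠ b)
    (h : m * (a * b) = a + b) : False := by
  have h3 : a * b ≤ m * (a * b) := Nat.le_mul_of_pos_left _ hm
  rcases Nat.lt_or_ge a b with hlt | hge
  · rcases Nat.lt_or_ge a 2 with h1 | h1
    · have ha1 : a = 1 := by omega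
      subst ha1
      rcases Nat.lt_or_ge m 2 with h2 | h2
      · have : m = 1 := by omega
        subst this; simp at h
      · nlinarith
    · have h4 : 2 * b ≤ a * b := Nat.mul_le_mul_right b h1
      linarith
  · have hlt : b < a := by omega
    rcases Nat.lt_or_ge b 2 with h1 | h1
    · have hb1 : b = 1 := by omega
      subst hb1
      rcases Nat.lt_or_ge m 2 with h2 | h2
      · have : m = 1 := by omega
        subst this; simp at h
      · nlinarith
    · have h4 : 2 * a ≤ b * a := Nat.mul_le_mul_right a h1
      have h5 : b * a = a * b := Nat.mul_comm b a
      linarith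

lemma half (p q x₁ x₂ : ℕ) (hp : p.Prime) (hq : 0 < q)
    (hx₁ : 0 < x₁) (hx₂ : 0 < x₂)
    (hnd : ¬ p ∣ x₁) (hdvd : p ∣ x₂)
    (heq : q * (x₁ * x₂) = p * (x₁ + x₂)) :
    x₁ = (p + 1) / q ∧ x₂ = p * ((p + 1) / q) := by
  obtain ⟨y, rfl⟩ := hdvd
  have hp0 : 0 < p := hp.pos
  have hy : 0 < y := Nat.pos_of_mul_pos_left (by rwa [Nat.mul_comm] at hx₂)
  have eq' : q * (x₁ * y) = x₁ + p * y := by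
    have h1 : p * (q * (x₁ * y)) = p * (x₁ + p * y) := by
      calc p * (q * (x₁ * y)) = q * (x₁ * (p * y)) := by ring
        _ = p * (x₁ + p * y) := heq
    exact Nat.eq_of_mul_eq_mul_left hp0 h1
  set d := q * y - 1 with hd_def
  have hqy : 0 < q * y := Nat.mul_pos hq hy
  have hm : q * y = d + 1 := by omega
  have hd : x₁ * d = p * y := by
    have h3 : x₁ * d + x₁ = x₁ + p * y := by
      rw [show x₁ * d + x₁ = x₁ * (d + 1) from by ring, ← hm,
        show x₁ * (q * y) = q * (x₁ * y) from by ring]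
      exact eq'
    linarith
  have hco : Nat.Coprime d y := by
    have hg1 : Nat.gcd d y ∣ d := Nat.gcd_dvd_left _ _
    have hg2 : Nat.gcd d y ∣ y := Nat.gcd_dvd_right _ _
    have hg3 : Nat.gcd d y ∣ d + 1 := hm ▸ hg2.mul_left q
    have : Nat.gcd d y ∣ 1 := by simpa using Nat.dvd_sub hg3 hg1
    exact Nat.dvd_one.mp this
  have hdpy : d ∣ p * y := ⟨x₁, by rw [← hd]; ring⟩
  have hdp : d ∣ p := hco.dvd_of_dvd_mul_right hdpy
  rcases (Nat.Prime.eq_one_or_self_of_dvd hp d hdp) with h1 | h1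
  · exfalso
    apply hnd
    exact ⟨y, by simpa [h1] using hd⟩
  · have hx1y : x₁ = y := by
      have : x₁ * p = y * p := by rw [← h1] at hd ⊢; linarith [hd]
      exact Nat.eq_of_mul_eq_mul_right hp0 this
    have hdiv : (p + 1) / q = y := by
      have h2 : p + 1 = y * q := by rw [Nat.mul_comm]; omega
      exact Nat.div_eq_of_eq_mul_left hq h2
    exact ⟨by rw [hdiv, hx1y], by rw [hdiv]⟩

theorem stmt_1 (p q x₁ x₂ : ℕ) (hp : p.Prime) (hq : 0 < q)
    (hx₁ : 0 < x₁) (hx₂ : 0 < x₂) (hne : x₁ ≠ x₂)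
    (heq : (q : ℚ) / p = 1 / x₁ + 1 / x₂) :
    (x₁ = (p + 1) / q ∧ x₂ = p * ((p + 1) / q)) ∨
    (x₁ = p * ((p + 1) / q) ∧ x₂ = (p + 1) / q) := by
  have hp0 : 0 < p := hp.pos
  have hpQ : (0:ℚ) < p := by exact_mod_cast hp0
  have h1 : (0:ℚ) < x₁ := by exact_mod_cast hx₁
  have h2 : (0:ℚ) < x₂ := by exact_mod_cast hx₂
  have hnat : q * (x₁ * x₂) = p * (x₁ + x₂) := by
    field_simp at heq
    have heq' : (q:ℚ) * (x₁ * x₂) = p * (x₁ + x₂) := by linear_combination heq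
    exact_mod_cast heq'
  -- p does not divide q
  have hpq : ¬ p ∣ q := by
    rintro ⟨m, rfl⟩
    have hm : 0 < m := Nat.pos_of_mul_pos_left (by rwa [Nat.mul_comm] at hq)
    have : m * (x₁ * x₂) = x₁ + x₂ :=
      Nat.eq_of_mul_eq_mul_left hp0 (by rw [← hnat]; ring)
    exact nosol m x₁ x₂ hm hx₁ hx₂ hne this
  have hpxx : p ∣ x₁ * x₂ := by
    have hdq : p ∣ q * (x₁ * x₂) := hnat ▸ Dvd.intro _ rfl
    rcases (hp.dvd_mul.mp hdq) with h | h
    · exact absurd h hpq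
    · exact h
  -- not both divisible
  have hnboth : ¬ (p ∣ x₁ ∧ p ∣ x₂) := by
    rintro ⟨⟨a, rfl⟩, ⟨b, rfl⟩⟩
    have ha : 0 < a := Nat.pos_of_mul_pos_left (by rwa [Nat.mul_comm] at hx₁)
    have hb : 0 < b := Nat.pos_of_mul_pos_left (by rwa [Nat.mul_comm] at hx₂)
    have hab : a ≠ b := fun h => hne (by rw [h])
    have hred : q * (a * b) = a + b := by
      have : (p * p) * (q * (a * b)) = (p * p) * (a + b) := by
        calc (p * p) * (q * (a * b)) = q * ((p * a) * (p * b)) := by ring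
          _ = p * (p * a + p * b) := hnat
          _ = (p * p) * (a + b) := by ring
      exact Nat.eq_of_mul_eq_mul_left (Nat.mul_pos hp0 hp0) this
    exact nosol q a b hq ha hb hab hred
  rcases (hp.dvd_mul.mp hpxx) with h | h
  · right
    have hnd : ¬ p ∣ x₂ := fun h2 => hnboth ⟨h, h2⟩
    have heq2 : q * (x₂ * x₁) = p * (x₂ + x₁) := by
      calc q * (x₂ * x₁) = q * (x₁ * x₂) := by ring
        _ = p * (x₁ + x₂) := hnat
        _ = p * (x₂ + x₁) := by ring
    obtain ⟨ha, hb⟩ := half p q x₂ x₁ hp hq hx₂ hx₁ hnd h heq2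
    exact ⟨hb, ha⟩
  · by_cases h' : p ∣ x₁
    · exact absurd ⟨h', h⟩ hnboth
    · left
      exact half p q x₁ x₂ hp hq hx₁ hx₂ h' h hnat
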